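/- arXiv:1807.08238 — 7 statements merged into one kernel-verified Lean document; each statement's English description precedes it below -/
import Mathlib

section
/- Let W be a real symmetric n×n matrix such that x W xᵀ ≥ 1 for every nonzero row vector x ∈ ℤⁿ. Then W is positive definite (i.e., x W xᵀ > 0 for every nonzero x ∈ ℝⁿ). -/
open Matrix Finset
variable {n : ℕ} (W : Matrix (Fin n) (Fin n) ℝ)

/-- clearing denominators -/
lemma aux_clear (r : Fin n → ℚ) :
    ∃ d : ℕ, 0 < d ∧ ∃ x : Fin n → ℤ, ∀ i, (x i : ℚ) = (d : ℚ) * r i := by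
  refine ⟨∏ i, (r i).den, Finset.prod_pos fun i _ => (r i).pos, 
    fun i => (r i).num * ∏ j ∈ Finset.univ.erase i, (r j).den, fun i => ?_⟩
  have h : (∏ j, ((r j).den) : ℕ) = (r i).den * ∏ j ∈ Finset.univ.erase i, (r j).den :=
    (Finset.mul_prod_erase _ _ (Finset.mem_univ i)).symm
  push_cast [h]
  rw [Rat.mul_comm ((r i).den : ℚ) _, mul_assoc, mul_comm ((r i).den : ℚ) (r i), Rat.mul_den_eq_num]
  ring

section B
variable {n : ℕ} (W : Matrix (Fin n) (Fin n) ℝ)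

lemma aux_smul_sq (c : ℝ) (u : Fin n → ℝ) :
    (c • u) ⬝ᵥ W.mulVec (c • u) = c ^ 2 * (u ⬝ᵥ W.mulVec u) := by
  rw [Matrix.mulVec_smul, dotProduct_smul, smul_dotProduct]
  simp [smul_eq_mul]; ring

lemma aux_rat_nonneg
    (hint : ∀ x : Fin n → ℤ, x ≠ 0 →
      1 ≤ (fun i => (x i : ℝ)) ⬝ᵥ W.mulVec (fun i => (x i : ℝ)))
    (r : Fin n → ℚ) :
    0 ≤ (fun i => (r i : ℝ)) ⬝ᵥ W.mulVec (fun i => (r i : ℝ)) := by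
  by_cases hr : r = 0
  · simp [hr, Matrix.mulVec, dotProduct]
  obtain ⟨d, hd, x, hx⟩ := aux_clear r
  have hx0 : x ≠ 0 := by
    intro h
    apply hr
    funext i
    have := hx i
    rw [h] at this
    simp at this
    rcases this with h | h
    · exact absurd h (Nat.cast_ne_zero.mpr hd.ne')
    · exact h
  have h1 := hint x hx0
  have hxr : (fun i => (x i : ℝ)) = (d : ℝ) • (fun i => (r i : ℝ)) := by
    funext i
    have := hx i
    have : ((x i : ℚ) : ℝ) = (((d : ℚ) * r i : ℚ) : ℝ) := by rw [this]
    push_cast at this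
    simpa [smul_eq_mul] using this
  rw [hxr, aux_smul_sq] at h1
  nlinarith [sq_nonneg (d : ℝ), hd]


/-- bound on the bilinear form by sup norms -/
lemma aux_bound (u v : Fin n → ℝ) :
    |u ⬝ᵥ W.mulVec v| ≤ (∑ i, ∑ j, |W i j|) * ‖u‖ * ‖v‖ := by
  have h1 : ∀ i, |u i * ∑ j, W i j * v j| ≤ ‖u‖ * ∑ j, |W i j| * ‖v‖ := by
    intro i
    rw [abs_mul]
    have hu : |u i| ≤ ‖u‖ := by
      simpa using norm_le_pi_norm u i
    have hv : |∑ j, W i j * v j| ≤ ∑ j, |W i j| * ‖v‖ := by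
      refine (Finset.abs_sum_le_sum_abs _ _).trans (Finset.sum_le_sum fun j _ => ?_)
      rw [abs_mul]
      have : |v j| ≤ ‖v‖ := by simpa using norm_le_pi_norm v j
      exact mul_le_mul_of_nonneg_left this (abs_nonneg _)
    exact mul_le_mul hu hv (abs_nonneg _) (norm_nonneg _)
  calc |u ⬝ᵥ W.mulVec v| = |∑ i, u i * ∑ j, W i j * v j| := by
        simp [dotProduct, Matrix.mulVec]
    _ ≤ ∑ i, |u i * ∑ j, W i j * v j| := Finset.abs_sum_le_sum_abs _ _
    _ ≤ ∑ i, ‖u‖ * ∑ j, |W i j| * ‖v‖ := Finset.sum_le_sum fun i _ => h1 i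
    _ = (∑ i, ∑ j, |W i j|) * ‖u‖ * ‖v‖ := by
        simp only [← Finset.sum_mul, ← Finset.mul_sum]
        ring

lemma aux_symm (hsymm : W.IsSymm) (u v : Fin n → ℝ) :
    u ⬝ᵥ W.mulVec v = v ⬝ᵥ W.mulVec u := by
  rw [Matrix.dotProduct_mulVec, ← Matrix.mulVec_transpose, hsymm.eq, dotProduct_comm]

lemma aux_expand (u v : Fin n → ℝ) :
    (u + v) ⬝ᵥ W.mulVec (u + v) =
      u ⬝ᵥ W.mulVec u + u ⬝ᵥ W.mulVec v + v ⬝ᵥ W.mulVec u + v ⬝ᵥ W.mulVec v := by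
  simp [Matrix.mulVec_add, dotProduct_add, add_dotProduct]
  ring

lemma aux_smul_right (c : ℝ) (u v : Fin n → ℝ) :
    u ⬝ᵥ W.mulVec (c • v) = c * (u ⬝ᵥ W.mulVec v) := by
  rw [Matrix.mulVec_smul, dotProduct_smul]
  rfl


end B

section C
variable {n : ℕ} (W : Matrix (Fin n) (Fin n) ℝ)

lemma aux_psd
    (hint : ∀ x : Fin n → ℤ, x ≠ 0 →
      1 ≤ (fun i => (x i : ℝ)) ⬝ᵥ W.mulVec (fun i => (x i : ℝ)))
    (y : Fin n → ℝ) : 0 ≤ y ⬝ᵥ W.mulVec y := by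
  by_contra hneg
  push_neg at hneg
  set C := ∑ i, ∑ j, |W i j| with hC
  have hC0 : 0 ≤ C := Finset.sum_nonneg fun i _ => Finset.sum_nonneg fun j _ => abs_nonneg _
  set K := 2 * C * (‖y‖ + 1) + C with hK
  have hK0 : 0 ≤ K := by positivity
  have key : ∀ ε : ℝ, 0 < ε → ε ≤ 1 → -(K * ε) ≤ y ⬝ᵥ W.mulVec y := by
    intro ε hε hε1
    have hr : ∀ i, ∃ q : ℚ, |y i - q| < ε := fun i => exists_rat_near (y i) hε
    choose r hrr using hr
    set rv : Fin n → ℝ := fun i => (r i : ℝ) with hrv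
    have hnorm : ‖y - rv‖ ≤ ε := by
      rw [pi_norm_le_iff_of_nonneg hε.le]
      intro i
      simpa [Real.norm_eq_abs, rv] using (hrr i).le
    have hQr : 0 ≤ rv ⬝ᵥ W.mulVec rv := aux_rat_nonneg W hint r
    have hdecomp := aux_expand W rv (y - rv)
    have hyy : rv + (y - rv) = y := by abel
    rw [hyy] at hdecomp
    have b1 : |rv ⬝ᵥ W.mulVec (y - rv)| ≤ C * ‖rv‖ * ‖y - rv‖ := aux_bound W rv (y - rv)
    have b2 : |(y - rv) ⬝ᵥ W.mulVec rv| ≤ C * ‖y - rv‖ * ‖rv‖ := aux_bound W (y - rv) rv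
    have b3 : |(y - rv) ⬝ᵥ W.mulVec (y - rv)| ≤ C * ‖y - rv‖ * ‖y - rv‖ := aux_bound W _ _
    have hrvn : ‖rv‖ ≤ ‖y‖ + ε := by
      have : rv = y - (y - rv) := by abel
      calc ‖rv‖ = ‖y - (y - rv)‖ := by rw [← this]
        _ ≤ ‖y‖ + ‖y - rv‖ := norm_sub_le _ _
        _ ≤ ‖y‖ + ε := by linarith
    have hyn : 0 ≤ ‖y‖ := norm_nonneg _
    have hn0 : 0 ≤ ‖y - rv‖ := norm_nonneg _
    rw [hdecomp]
    have m1 : C * ‖rv‖ * ‖y - rv‖ ≤ C * (‖y‖ + 1) * ε := by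
      gcongr
      linarith
    have m2 : C * ‖y - rv‖ * ‖rv‖ ≤ C * (‖y‖ + 1) * ε := by
      calc C * ‖y - rv‖ * ‖rv‖ = C * ‖rv‖ * ‖y - rv‖ := by ring
        _ ≤ C * (‖y‖ + 1) * ε := m1
    have m3 : C * ‖y - rv‖ * ‖y - rv‖ ≤ C * ε := by
      have t1 : ‖y - rv‖ * ‖y - rv‖ ≤ ε * ε := mul_le_mul hnorm hnorm hn0 hε.le
      have t2 : ε * ε ≤ ε := by nlinarith
      have t3 : C * (‖y - rv‖ * ‖y - rv‖) ≤ C * ε :=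
        mul_le_mul_of_nonneg_left (t1.trans t2) hC0
      linarith [t3]
    have e1 : rv ⬝ᵥ W.mulVec (y - rv) ≥ -(C * (‖y‖ + 1) * ε) := by
      have := neg_abs_le (rv ⬝ᵥ W.mulVec (y - rv))
      linarith
    have e2 : (y - rv) ⬝ᵥ W.mulVec rv ≥ -(C * (‖y‖ + 1) * ε) := by
      have := neg_abs_le ((y - rv) ⬝ᵥ W.mulVec rv)
      linarith
    have e3 : (y - rv) ⬝ᵥ W.mulVec (y - rv) ≥ -(C * ε) := by
      have := neg_abs_le ((y - rv) ⬝ᵥ W.mulVec (y - rv))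
      linarith
    nlinarith
  set Q := y ⬝ᵥ W.mulVec y with hQ
  have hε : (0:ℝ) < min 1 (-Q / (K + 1)) := by
    apply lt_min one_pos
    apply div_pos (by linarith) (by linarith)
  have h1 := key _ hε (min_le_left _ _)
  have h2 : min 1 (-Q / (K + 1)) ≤ -Q / (K + 1) := min_le_right _ _
  have hK1 : (0:ℝ) < K + 1 := by linarith
  have h3 : K * (-Q / (K + 1)) < -Q := by
    rw [← mul_div_assoc, div_lt_iff₀ hK1]
    nlinarith
  linarith [mul_le_mul_of_nonneg_left h2 hK0, h1, h3]
end C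

section D
variable {n : ℕ} (W : Matrix (Fin n) (Fin n) ℝ)

lemma aux_kernel (hsymm : W.IsSymm)
    (hpsd : ∀ z : Fin n → ℝ, 0 ≤ z ⬝ᵥ W.mulVec z)
    (y : Fin n → ℝ) (hy : y ⬝ᵥ W.mulVec y = 0) (x : Fin n → ℝ) :
    x ⬝ᵥ W.mulVec y = 0 := by
  by_contra hb
  set b := x ⬝ᵥ W.mulVec y with hbdef
  set t := -(x ⬝ᵥ W.mulVec x + 1) / (2 * b) with ht
  have h0 := hpsd (x + t • y)
  rw [aux_expand] at h0
  have h1 : x ⬝ᵥ W.mulVec (t • y) = t * b := aux_smul_right W t x y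
  have h2 : (t • y) ⬝ᵥ W.mulVec x = t * b := by
    rw [aux_symm W hsymm, h1]
  have h3 : (t • y) ⬝ᵥ W.mulVec (t • y) = t ^ 2 * (y ⬝ᵥ W.mulVec y) := aux_smul_sq W t y
  rw [h1, h2, h3, hy] at h0
  have htb : t * b = -(x ⬝ᵥ W.mulVec x + 1) / 2 := by
    rw [ht]
    field_simp
  rw [htb] at h0
  linarith

lemma aux_floor_eq_abs {u v : ℝ} (h : ⌊u⌋ = ⌊v⌋) : |u - v| < 1 := by
  have h1 := Int.floor_le u
  have h2 := Int.lt_floor_add_one u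
  have h3 := Int.floor_le v
  have h4 := Int.lt_floor_add_one v
  rw [h] at h1 h2
  rw [abs_sub_lt_iff]
  constructor <;> linarith

lemma aux_dirichlet (y : Fin n → ℝ) (N : ℕ) (hN : 0 < N) :
    ∃ q : ℕ, ∃ p : Fin n → ℤ, 1 ≤ q ∧ ∀ i, |(q : ℝ) * y i - p i| < 1 / N := by
  set f : ℕ → (Fin n → Fin N) := fun q i =>
    ⟨(⌊(N : ℝ) * Int.fract ((q : ℝ) * y i)⌋).toNat, by
      have hf0 : (0:ℝ) ≤ Int.fract ((q : ℝ) * y i) := Int.fract_nonneg _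
      have hf1 : Int.fract ((q : ℝ) * y i) < 1 := Int.fract_lt_one _
      have hNc : (0:ℝ) < (N:ℝ) := by exact_mod_cast hN
      have hlt : (N : ℝ) * Int.fract ((q : ℝ) * y i) < N := by nlinarith
      have hlt' : ⌊(N : ℝ) * Int.fract ((q : ℝ) * y i)⌋ < (N : ℤ) :=
        Int.floor_lt.mpr (by exact_mod_cast hlt)
      omega
      ⟩ with hf
  have key : ∀ a b : ℕ, a < b → f a = f b →
      ∃ q : ℕ, ∃ p : Fin n → ℤ, 1 ≤ q ∧ ∀ i, |(q : ℝ) * y i - p i| < 1 / N := by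
    intro a b hlt hfe
    refine ⟨b - a, fun i => ⌊(b : ℝ) * y i⌋ - ⌊(a : ℝ) * y i⌋, by omega, fun i => ?_⟩
    have hNc : (0:ℝ) < (N:ℝ) := by exact_mod_cast hN
    have hcast : ((b - a : ℕ) : ℝ) = (b : ℝ) - (a : ℝ) := by
      push_cast [Nat.cast_sub hlt.le]
      ring
    have hfloor : ⌊(N : ℝ) * Int.fract ((a : ℝ) * y i)⌋ = ⌊(N : ℝ) * Int.fract ((b : ℝ) * y i)⌋ := by
      have hval := congrArg Fin.val (congrFun hfe i)
      simp only [hf] at hval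
      have h0a : 0 ≤ ⌊(N : ℝ) * Int.fract ((a : ℝ) * y i)⌋ :=
        Int.floor_nonneg.mpr (mul_nonneg hNc.le (Int.fract_nonneg _))
      have h0b : 0 ≤ ⌊(N : ℝ) * Int.fract ((b : ℝ) * y i)⌋ :=
        Int.floor_nonneg.mpr (mul_nonneg hNc.le (Int.fract_nonneg _))
      omega
    have habs := aux_floor_eq_abs hfloor
    have hfr : (N : ℝ) * Int.fract ((a : ℝ) * y i) - (N : ℝ) * Int.fract ((b : ℝ) * y i)
        = -((N : ℝ) * (((b - a : ℕ) : ℝ) * y i - ((⌊(b : ℝ) * y i⌋ - ⌊(a : ℝ) * y i⌋ : ℤ) : ℝ))) := by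
      rw [hcast, Int.fract, Int.fract]
      push_cast
      ring
    rw [hfr, abs_neg, abs_mul, abs_of_pos hNc] at habs
    rw [lt_div_iff₀ hNc]
    linarith [abs_nonneg ((((b - a : ℕ) : ℝ)) * y i - ((⌊(b : ℝ) * y i⌋ - ⌊(a : ℝ) * y i⌋ : ℤ) : ℝ))]
  have hcard : (Finset.univ : Finset (Fin n → Fin N)).card < (Finset.range (N ^ n + 1)).card := by
    simp [Finset.card_univ]
  obtain ⟨a, ha, b, hb, hab, hfab⟩ :=
    Finset.exists_ne_map_eq_of_card_lt_of_maps_to hcard (fun a _ => Finset.mem_univ (f a))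
  rcases (Ne.lt_or_gt hab) with hlt | hlt
  · exact key a b hlt hfab
  · exact key b a hlt hfab.symm
end D

/-- A real symmetric matrix `W` with `x W xᵀ ≥ 1` for every nonzero integer vector `x`
is positive definite. -/
theorem integral_posDef_is_posDef (n : ℕ) (W : Matrix (Fin n) (Fin n) ℝ)
    (hsymm : W.IsSymm)
    (hint : ∀ x : Fin n → ℤ, x ≠ 0 →
      1 ≤ (fun i => (x i : ℝ)) ⬝ᵥ W.mulVec (fun i => (x i : ℝ))) :
    ∀ y : Fin n → ℝ, y ≠ 0 → 0 < y ⬝ᵥ W.mulVec y := by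
  intro y hy
  have hpsd := aux_psd W hint
  rcases (hpsd y).lt_or_eq with hlt | heq
  · exact hlt
  exfalso
  have hQ0 : y ⬝ᵥ W.mulVec y = 0 := heq.symm
  have hker : ∀ x : Fin n → ℝ, x ⬝ᵥ W.mulVec y = 0 := aux_kernel W hsymm hpsd y hQ0
  set C := ∑ i, ∑ j, |W i j| with hC
  have hC0 : 0 ≤ C := Finset.sum_nonneg fun i _ => Finset.sum_nonneg fun j _ => abs_nonneg _
  obtain ⟨j, hj⟩ : ∃ j, y j ≠ 0 := Function.ne_iff.mp hy
  have hyj : 0 < |y j| := abs_pos.mpr hj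
  obtain ⟨N, hN⟩ := exists_nat_gt (max C (1 / |y j|))
  have hNC : C < N := lt_of_le_of_lt (le_max_left _ _) hN
  have hNy : 1 / |y j| < N := lt_of_le_of_lt (le_max_right _ _) hN
  have hN0R : (0:ℝ) < N := (by positivity : (0:ℝ) < 1 / |y j|).trans hNy
  have hN0 : 0 < N := by exact_mod_cast hN0R
  have hN1 : (1:ℝ) ≤ N := by exact_mod_cast hN0
  obtain ⟨q, p, hq1, hp⟩ := aux_dirichlet y N hN0
  have hq1R : (1:ℝ) ≤ q := by exact_mod_cast hq1
  have hpne : p ≠ 0 := by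
    intro h
    have h5 := hp j
    rw [h] at h5
    simp only [Pi.zero_apply, Int.cast_zero, sub_zero] at h5
    have hx1 : 1 < (N:ℝ) * |y j| := by
      rw [div_lt_iff₀ hyj] at hNy
      linarith
    have h2 : |(q:ℝ) * y j| = (q:ℝ) * |y j| := by
      rw [abs_mul, abs_of_pos (by linarith : (0:ℝ) < (q:ℝ))]
    rw [h2, lt_div_iff₀ hN0R] at h5
    nlinarith
  have h1 := hint p hpne
  set v : Fin n → ℝ := fun i => (p i : ℝ) - (q:ℝ) * y i with hv
  have hvnorm : ‖v‖ ≤ 1 / N := by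
    rw [pi_norm_le_iff_of_nonneg (by positivity)]
    intro i
    have h6 := (hp i).le
    rw [abs_sub_comm] at h6
    simpa [hv, Real.norm_eq_abs] using h6
  have hdecomp : (fun i => ((p i : ℝ))) = v + (q:ℝ) • y := by
    funext i
    simp [hv]
  rw [hdecomp, aux_expand] at h1
  have k1 : v ⬝ᵥ W.mulVec ((q:ℝ) • y) = 0 := by
    rw [aux_smul_right, hker v]
    ring
  have k2 : ((q:ℝ) • y) ⬝ᵥ W.mulVec v = 0 := by
    rw [aux_symm W hsymm]
    exact k1
  have k3 : ((q:ℝ) • y) ⬝ᵥ W.mulVec ((q:ℝ) • y) = 0 := by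
    rw [aux_smul_sq, hQ0]
    ring
  rw [k1, k2, k3] at h1
  have hb := aux_bound W v v
  have hm : C * ‖v‖ * ‖v‖ ≤ C * (1/N) * (1/N) := by gcongr
  have heq2 : C * (1 / (N:ℝ)) * (1 / N) = C / (N * N) := by ring
  have h3 : C * (1/(N:ℝ)) * (1/N) < 1 := by
    rw [heq2, div_lt_one (by positivity)]
    nlinarith
  have h4 : v ⬝ᵥ W.mulVec v ≤ C * ‖v‖ * ‖v‖ := le_trans (le_abs_self _) hb
  linarith
end

section
/- Let A and B be real positive semidefinite (symmetric) n×n matrices and let P be an n×n permutation matrix such that AP = PA. Then tr(ABP) ≤ tr(AB). -/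
open Matrix

lemma perm_mul_transpose (n : ℕ) (σ : Equiv.Perm (Fin n)) :
    (σ.permMatrix ℝ) * (σ.permMatrix ℝ)ᵀ = 1 := by
  rw [show (σ.permMatrix ℝ)ᵀ = σ.symm.toPEquiv.toMatrix by
      rw [Equiv.toPEquiv_symm, PEquiv.toMatrix_symm],
    ← PEquiv.toMatrix_trans, ← Equiv.toPEquiv_trans, Equiv.self_trans_symm,
    Equiv.toPEquiv_refl, PEquiv.toMatrix_refl]

lemma psd_trace_nonneg {n : ℕ} {M : Matrix (Fin n) (Fin n) ℝ} (hM : M.PosSemidef) :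
    0 ≤ M.trace := by
  rw [Matrix.trace]
  refine Finset.sum_nonneg fun i _ => ?_
  simpa [Matrix.diag, Matrix.mulVec, dotProduct, Pi.single_apply] using hM.dotProduct_mulVec_nonneg (Pi.single i 1)

open scoped MatrixOrder in
lemma psd_trace_mul_nonneg {n : ℕ} {M N : Matrix (Fin n) (Fin n) ℝ}
    (hM : M.PosSemidef) (hN : N.PosSemidef) : 0 ≤ (M * N).trace := by
  have h1 : M * N = M * CFC.sqrt N * CFC.sqrt N := by
    rw [Matrix.mul_assoc, CFC.sqrt_mul_sqrt_self N hN.nonneg]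
  rw [h1, trace_mul_cycle]
  have h2 : CFC.sqrt N * M * CFC.sqrt N = CFC.sqrt N * M * (CFC.sqrt N)ᴴ := by
    rw [(CFC.sqrt_nonneg N).posSemidef.isHermitian.eq]
  rw [h2]
  exact psd_trace_nonneg (hM.mul_mul_conjTranspose_same _)

/-- If `A` and `B` are real positive semidefinite `n × n` matrices and `P` is a permutation
matrix commuting with `A`, then `tr(ABP) ≤ tr(AB)`. -/
theorem trace_perm_le (n : ℕ) (A B P : Matrix (Fin n) (Fin n) ℝ)
    (hA : A.PosSemidef) (hB : B.PosSemidef)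
    (hP : ∃ σ : Equiv.Perm (Fin n), P = σ.permMatrix ℝ)
    (hcomm : A * P = P * A) :
    (A * B * P).trace ≤ (A * B).trace := by
  obtain ⟨σ, rfl⟩ := hP
  set P := σ.permMatrix ℝ with hPdef
  have hPPt : P * Pᵀ = 1 := perm_mul_transpose n σ
  have hAt : Aᵀ = A := by
    ext i j
    simpa using congrFun (congrFun hA.isHermitian.eq i) j
  have hBt : Bᵀ = B := by
    ext i j
    simpa using congrFun (congrFun hB.isHermitian.eq i) j
  have hAPt : A * Pᵀ = Pᵀ * A := by
    have := congrArg Matrix.transpose hcomm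
    simp only [Matrix.transpose_mul, hAt] at this
    exact this.symm
  -- key PSD matrix
  have hpsd : ((P - 1) * A * (P - 1)ᴴ).PosSemidef := hA.mul_mul_conjTranspose_same _
  have hct : (P - 1)ᴴ = Pᵀ - 1 := by
    ext i j
    simp [Matrix.conjTranspose_apply, Matrix.one_apply, eq_comm]
  rw [hct] at hpsd
  have key : 0 ≤ ((P - 1) * A * (Pᵀ - 1) * B).trace := psd_trace_mul_nonneg hpsd hB
  have hPAPt : P * A * Pᵀ = A := by
    rw [← hcomm, Matrix.mul_assoc, hPPt, Matrix.mul_one]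
  -- trace identities
  have t1 : (P * A * B).trace = (A * B * P).trace := (trace_mul_cycle A B P).symm
  have t2 : (A * Pᵀ * B).trace = (A * B * P).trace := by
    calc (A * Pᵀ * B).trace = (B * (A * Pᵀ)).trace := trace_mul_comm _ _
      _ = (B * Pᵀ * A).trace := by rw [hAPt, Matrix.mul_assoc]
      _ = ((B * Pᵀ * A)ᵀ).trace := (trace_transpose _).symm
      _ = (A * (P * B)).trace := by
          simp [Matrix.transpose_mul, hAt, hBt, Matrix.mul_assoc]
      _ = (P * B * A).trace := trace_mul_comm _ _
      _ = (A * P * B).trace := by rw [trace_mul_cycle]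
      _ = (P * A * B).trace := by rw [hcomm]
      _ = (A * B * P).trace := (trace_mul_cycle A B P).symm
  have expand : (P - 1) * A * (Pᵀ - 1) * B
      = P * A * Pᵀ * B - P * A * B - A * Pᵀ * B + A * B := by
    simp only [Matrix.sub_mul, Matrix.mul_sub, Matrix.one_mul, Matrix.mul_one]
    noncomm_ring
  rw [expand, hPAPt] at key
  simp only [Matrix.trace_add, Matrix.trace_sub, t1, t2] at key
  linarith
end

section
/- Let U_m be the m×m matrix with all diagonal entries equal to 1, entries −1/2 immediately above and below the diagonal, and 0 elsewhere. If W is a real symmetric n×n matrix with x W xᵀ ≥ 1 for every nonzero x ∈ ℤⁿ, then the Kronecker product U_m ⊗ W satisfies y (U_m ⊗ W) yᵀ ≥ 1 for every nonzero y ∈ ℤ^{mn}. -/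
open Matrix Kronecker

/-- The tridiagonal matrix `U_m = (1/2)·tridiag(−1, 2, −1)`. -/
noncomputable def Umat (m : ℕ) : Matrix (Fin m) (Fin m) ℝ :=
  Matrix.of fun i j =>
    if (i : ℕ) = (j : ℕ) then 1
    else if (i : ℕ) + 1 = (j : ℕ) ∨ (j : ℕ) + 1 = (i : ℕ) then -(1 / 2)
    else 0

/-- The entry function of `Umat`, as a function on naturals. -/
noncomputable def Uent (i j : ℕ) : ℝ :=
  if i = j then 1 else if i + 1 = j ∨ j + 1 = i then -(1 / 2) else 0

/-- The bilinear form of `W` evaluated on (casts of) integer vectors. -/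
noncomputable def bf {n : ℕ} (W : Matrix (Fin n) (Fin n) ℝ) (u v : Fin n → ℤ) : ℝ :=
  (fun a => (u a : ℝ)) ⬝ᵥ W.mulVec (fun a => (v a : ℝ))

lemma dot_kron {m n : ℕ} (A : Matrix (Fin m) (Fin m) ℝ) (W : Matrix (Fin n) (Fin n) ℝ)
    (v : Fin m × Fin n → ℝ) :
    v ⬝ᵥ (A ⊗ₖ W).mulVec v =
      ∑ i : Fin m, ∑ j : Fin m,
        A i j * ((fun a => v (i, a)) ⬝ᵥ W.mulVec (fun b => v (j, b))) := by
  simp only [dotProduct, Matrix.mulVec, Matrix.kroneckerMap_apply,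
    Fintype.sum_prod_type, Finset.mul_sum]
  refine Finset.sum_congr rfl fun x _ => ?_
  rw [Finset.sum_comm]
  exact Finset.sum_congr rfl fun x1 _ => Finset.sum_congr rfl fun y _ =>
    Finset.sum_congr rfl fun b _ => by ring

lemma bf_symm {n : ℕ} {W : Matrix (Fin n) (Fin n) ℝ} (hsymm : W.IsSymm) (u v : Fin n → ℤ) :
    bf W u v = bf W v u := by
  have key : ∀ p q : Fin n → ℝ, p ⬝ᵥ W.mulVec q = W.mulVec p ⬝ᵥ q := by
    intro p q
    rw [Matrix.dotProduct_mulVec]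
    nth_rewrite 1 [← hsymm]
    rw [Matrix.vecMul_transpose]
  unfold bf
  rw [key, dotProduct_comm]

lemma cast_sub_fun {n : ℕ} (u v : Fin n → ℤ) :
    (fun a => (((u - v) a : ℤ) : ℝ)) = (fun a => (u a : ℝ)) - fun a => (v a : ℝ) := by
  funext a
  simp

lemma bf_sub_left {n : ℕ} (W : Matrix (Fin n) (Fin n) ℝ) (u u' v : Fin n → ℤ) :
    bf W (u - u') v = bf W u v - bf W u' v := by
  unfold bf
  rw [cast_sub_fun, sub_dotProduct]

lemma bf_sub_right {n : ℕ} (W : Matrix (Fin n) (Fin n) ℝ) (u v v' : Fin n → ℤ) :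
    bf W u (v - v') = bf W u v - bf W u v' := by
  unfold bf
  rw [cast_sub_fun, Matrix.mulVec_sub, dotProduct_sub]

lemma bf_zero_right {n : ℕ} (W : Matrix (Fin n) (Fin n) ℝ) (u : Fin n → ℤ) :
    bf W u 0 = 0 := by
  unfold bf
  have : (fun a => (((0 : Fin n → ℤ) a : ℤ) : ℝ)) = 0 := by funext a; simp
  rw [this, Matrix.mulVec_zero, dotProduct_zero]

lemma bf_zero_left {n : ℕ} (W : Matrix (Fin n) (Fin n) ℝ) (u : Fin n → ℤ) :
    bf W 0 u = 0 := by
  unfold bf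
  have : (fun a => (((0 : Fin n → ℤ) a : ℤ) : ℝ)) = 0 := by funext a; simp
  rw [this, zero_dotProduct]

lemma row_sum (k : ℕ) (C : ℕ → ℕ → ℝ) (hC : ∀ j, C j (k+1) = 0)
    (i : ℕ) (hi : i < k + 1) :
    ∑ j ∈ Finset.range (k+1), Uent i j * C i j
      = C i i - (1/2) * C i (i+1) - (1/2) * (if i = 0 then 0 else C i (i-1)) := by
  have hsplit : ∀ j, Uent i j * C i j =
      (if j = i then C i i else 0) + (if j = i + 1 then -(1/2) * C i j else 0)
        + (if j + 1 = i then -(1/2) * C i j else 0) := by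
    intro j
    unfold Uent
    split_ifs <;> first | (exfalso; omega) | (subst_vars; ring)
  rw [Finset.sum_congr rfl fun j _ => hsplit j, Finset.sum_add_distrib,
    Finset.sum_add_distrib]
  have h1 : ∑ j ∈ Finset.range (k+1), (if j = i then C i i else 0) = C i i := by
    rw [Finset.sum_ite_eq' (Finset.range (k+1)) i fun _ => C i i, if_pos (Finset.mem_range.mpr hi)]
  have h2 : ∑ j ∈ Finset.range (k+1), (if j = i + 1 then -(1/2) * C i j else 0)
      = -(1/2) * C i (i+1) := by
    rw [Finset.sum_ite_eq' (Finset.range (k+1)) (i+1) fun j => -(1/2) * C i j]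
    by_cases h : i + 1 < k + 1
    · rw [if_pos (Finset.mem_range.mpr h)]
    · have : i + 1 = k + 1 := by omega
      rw [if_neg (by simp [Finset.mem_range]; omega), this, hC i]
      ring
  have h3 : ∑ j ∈ Finset.range (k+1), (if j + 1 = i then -(1/2) * C i j else 0)
      = -(1/2) * (if i = 0 then 0 else C i (i-1)) := by
    rcases i with _ | t
    · rw [if_pos rfl, Finset.sum_eq_zero]
      · ring
      · intro j _; rw [if_neg (by omega)]
    · have heq : ∀ j, ((j + 1 = t + 1) = (j = t)) := fun j => by
        simp [Nat.add_right_cancel_iff]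
      simp only [heq]
      rw [Finset.sum_ite_eq' (Finset.range (k+1)) t fun j => -(1/2) * C (t+1) j,
        if_pos (Finset.mem_range.mpr (by omega))]
      rw [if_neg (by omega)]
      simp
  rw [h1, h2, h3]
  ring

/-- If `W` is symmetric and integral positive definite, then so is `U_m ⊗ W`. -/
theorem kronecker_Umat_integral_posDef (m n : ℕ)
    (W : Matrix (Fin n) (Fin n) ℝ) (hsymm : W.IsSymm)
    (hint : ∀ x : Fin n → ℤ, x ≠ 0 →
      1 ≤ (fun i => (x i : ℝ)) ⬝ᵥ W.mulVec (fun i => (x i : ℝ))) :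
    ∀ y : Fin m × Fin n → ℤ, y ≠ 0 →
      1 ≤ (fun i => (y i : ℝ)) ⬝ᵥ (Umat m ⊗ₖ W).mulVec (fun i => (y i : ℝ)) := by
  have hq1 : ∀ u : Fin n → ℤ, u ≠ 0 → 1 ≤ bf W u u := fun u hu => hint u hu
  have hq0 : ∀ u : Fin n → ℤ, 0 ≤ bf W u u := by
    intro u
    rcases eq_or_ne u 0 with rfl | h
    · rw [bf_zero_left]
    · linarith [hq1 u h]
  intro y hy
  rcases Nat.eq_zero_or_pos m with rfl | hm
  · exact absurd (funext fun p => p.1.elim0) hy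
  obtain ⟨k, rfl⟩ : ∃ k, m = k + 1 := ⟨m - 1, by omega⟩
  -- rows of `y` as integer vectors, extended by zero beyond `k`
  set g : ℕ → (Fin n → ℤ) := fun i => if h : i < k + 1 then (fun a => y (⟨i, h⟩, a)) else 0
    with hgdef
  have hgtop : ∀ i, k + 1 ≤ i → g i = 0 := by
    intro i hi; simp only [hgdef]; rw [dif_neg (by omega)]
  set C : ℕ → ℕ → ℝ := fun i j => bf W (g i) (g j) with hCdef
  set d : ℕ → (Fin n → ℤ) := fun i => g i - g (i+1) with hddef
  have hCtop : ∀ j, C j (k+1) = 0 := by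
    intro j; simp only [hCdef]; rw [hgtop (k+1) le_rfl, bf_zero_right]
  have hCsymm : ∀ i j, C i j = C j i := fun i j => bf_symm hsymm _ _
  have hgv : ∀ i : Fin (k+1), (fun a => ((g (i:ℕ)) a : ℝ)) = (fun a => ((y (i, a) : ℤ) : ℝ)) := by
    intro i
    funext a
    simp only [hgdef]
    rw [dif_pos i.isLt]
  -- Step 1 : expand the quadratic form as a double sum
  have hQ1 : (fun p => (y p : ℝ)) ⬝ᵥ (Umat (k+1) ⊗ₖ W).mulVec (fun p => (y p : ℝ))
      = ∑ i ∈ Finset.range (k+1), ∑ j ∈ Finset.range (k+1), Uent i j * C i j := by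
    rw [dot_kron]
    have hpt : ∀ i j : Fin (k+1),
        Umat (k+1) i j * ((fun a => ((fun p => (y p : ℝ)) (i, a))) ⬝ᵥ
          W.mulVec (fun b => ((fun p => (y p : ℝ)) (j, b))))
        = Uent (i:ℕ) (j:ℕ) * C (i:ℕ) (j:ℕ) := by
      intro i j
      simp only [hCdef, bf]
      rw [hgv i, hgv j]
      rfl
    rw [Finset.sum_congr rfl fun i _ => Finset.sum_congr rfl fun j _ => hpt i j]
    have hin : ∀ i : Fin (k+1), ∑ j : Fin (k+1), Uent (i:ℕ) (j:ℕ) * C (i:ℕ) (j:ℕ)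
        = ∑ j ∈ Finset.range (k+1), Uent (i:ℕ) j * C (i:ℕ) j :=
      fun i => Fin.sum_univ_eq_sum_range (fun j => Uent (i:ℕ) j * C (i:ℕ) j) (k+1)
    rw [show (∑ i : Fin (k+1), ∑ j : Fin (k+1), Uent (i:ℕ) (j:ℕ) * C (i:ℕ) (j:ℕ))
        = ∑ i : Fin (k+1), ∑ j ∈ Finset.range (k+1), Uent (i:ℕ) j * C (i:ℕ) j
      from Finset.sum_congr rfl fun i _ => hin i]
    exact Fin.sum_univ_eq_sum_range (fun i => ∑ j ∈ Finset.range (k+1), Uent i j * C i j) (k+1)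
  -- Step 2 : evaluate the row sums
  have hQ2 : (fun p => (y p : ℝ)) ⬝ᵥ (Umat (k+1) ⊗ₖ W).mulVec (fun p => (y p : ℝ))
      = ∑ i ∈ Finset.range (k+1),
          (C i i - (1/2) * C i (i+1) - (1/2) * (if i = 0 then 0 else C i (i-1))) := by
    rw [hQ1]
    exact Finset.sum_congr rfl fun i hi => row_sum k C hCtop i (Finset.mem_range.mp hi)
  set S : ℝ := ∑ i ∈ Finset.range (k+1), C i i with hSdef
  set T : ℝ := ∑ i ∈ Finset.range (k+1), C i (i+1) with hTdef
  have hA : ∑ i ∈ Finset.range (k+1), (if i = 0 then 0 else C i (i-1)) = T := by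
    rw [Finset.sum_range_succ']
    have h1 : ∀ i : ℕ, (if i + 1 = 0 then (0:ℝ) else C (i+1) (i+1-1)) = C i (i+1) := by
      intro i
      rw [if_neg (Nat.succ_ne_zero i)]
      simp only [Nat.add_sub_cancel]
      exact hCsymm _ _
    rw [Finset.sum_congr rfl fun i _ => h1 i, if_pos rfl, add_zero, hTdef,
      Finset.sum_range_succ, hCtop k, add_zero]
  have hB : ∑ i ∈ Finset.range (k+1), C (i+1) (i+1) = S - C 0 0 := by
    have e1 := Finset.sum_range_succ' (fun i => C i i) (k+1)
    have e2 := Finset.sum_range_succ (fun i => C i i) (k+1)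
    rw [e2, hCtop (k+1), add_zero] at e1
    rw [hSdef]
    linarith [e1]
  have hD : ∀ i, bf W (d i) (d i) = C i i - 2 * C i (i+1) + C (i+1) (i+1) := by
    intro i
    simp only [hddef]
    rw [bf_sub_left, bf_sub_right, bf_sub_right]
    have h := hCsymm i (i+1)
    simp only [hCdef] at h ⊢
    linarith [h]
  -- Step 3 : the key algebraic identity
  have hQ3 : (fun p => (y p : ℝ)) ⬝ᵥ (Umat (k+1) ⊗ₖ W).mulVec (fun p => (y p : ℝ))
      = (1/2) * (bf W (g 0) (g 0) + ∑ i ∈ Finset.range (k+1), bf W (d i) (d i)) := by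
    rw [hQ2]
    have hsum1 : ∑ i ∈ Finset.range (k+1),
        (C i i - (1/2) * C i (i+1) - (1/2) * (if i = 0 then 0 else C i (i-1)))
        = S - (1/2) * T - (1/2) * T := by
      rw [Finset.sum_sub_distrib, Finset.sum_sub_distrib, ← Finset.mul_sum, ← Finset.mul_sum,
        hA, ← hSdef, ← hTdef]
    have hsum2 : ∑ i ∈ Finset.range (k+1), bf W (d i) (d i) = S - 2 * T + (S - C 0 0) := by
      rw [Finset.sum_congr rfl fun i _ => hD i, Finset.sum_add_distrib,
        Finset.sum_sub_distrib, ← Finset.mul_sum, hB, ← hSdef, ← hTdef]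
    have hg0 : bf W (g 0) (g 0) = C 0 0 := rfl
    rw [hsum1, hsum2, hg0]
    ring
  -- telescoping
  have htel : ∀ j, ∑ i ∈ Finset.range j, d i = g 0 - g j := by
    intro j
    simp only [hddef]
    exact Finset.sum_range_sub' g j
  have hexd : ∀ s : Finset ℕ, (∑ i ∈ s, d i) ≠ 0 → ∃ j ∈ s, d j ≠ 0 := by
    intro s hs
    by_contra h
    push_neg at h
    exact hs (Finset.sum_eq_zero h)
  obtain ⟨⟨t, a⟩, hta⟩ : ∃ p, y p ≠ 0 := Function.ne_iff.mp hy
  have hgt : g (t:ℕ) ≠ 0 := by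
    simp only [hgdef]
    rw [dif_pos t.isLt]
    intro h
    exact hta (by simpa using congrFun h a)
  -- Step 4 : the lower bound
  have key : 2 ≤ bf W (g 0) (g 0) + ∑ i ∈ Finset.range (k+1), bf W (d i) (d i) := by
    rcases eq_or_ne (g 0) 0 with h0 | h0
    · have h1 : (∑ i ∈ Finset.range (t:ℕ), d i) ≠ 0 := by
        rw [htel (t:ℕ), h0, zero_sub]
        simpa using hgt
      obtain ⟨j, hj, hdj⟩ := hexd _ h1
      have h2 : (∑ i ∈ Finset.Ico (t:ℕ) (k+1), d i) ≠ 0 := by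
        rw [Finset.sum_Ico_eq_sub _ (le_of_lt t.isLt), htel (k+1), htel (t:ℕ),
          hgtop (k+1) le_rfl, h0]
        simpa using hgt
      obtain ⟨j', hj', hdj'⟩ := hexd _ h2
      rw [Finset.mem_range] at hj
      rw [Finset.mem_Ico] at hj'
      have hne : j ≠ j' := by omega
      have hsub : ({j, j'} : Finset ℕ) ⊆ Finset.range (k+1) := by
        intro x hx
        simp only [Finset.mem_insert, Finset.mem_singleton] at hx
        rcases hx with rfl | rfl <;> rw [Finset.mem_range] <;> omega
      have hle : ∑ i ∈ ({j, j'} : Finset ℕ), bf W (d i) (d i)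
          ≤ ∑ i ∈ Finset.range (k+1), bf W (d i) (d i) :=
        Finset.sum_le_sum_of_subset_of_nonneg hsub (fun i _ _ => hq0 _)
      rw [Finset.sum_pair hne] at hle
      have b1 := hq1 _ hdj
      have b2 := hq1 _ hdj'
      have b3 := hq0 (g 0)
      linarith
    · have h1 : (∑ i ∈ Finset.range (k+1), d i) ≠ 0 := by
        rw [htel (k+1), hgtop (k+1) le_rfl, sub_zero]
        exact h0
      obtain ⟨j, hj, hdj⟩ := hexd _ h1
      have hle : bf W (d j) (d j) ≤ ∑ i ∈ Finset.range (k+1), bf W (d i) (d i) :=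
        Finset.single_le_sum (fun i _ => hq0 _) hj
      have b1 := hq1 _ hdj
      have b2 := hq1 _ h0
      linarith
  rw [hQ3] at *
  linarith [key]
end

section
/- Let Q be a k×l integer matrix every row of which is nonzero, and let W be a real l×l matrix such that x W xᵀ ≥ 1 for every nonzero x ∈ ℤˡ. Then k ≤ tr(W · QᵀQ). -/
open Matrix

lemma sum_swap3_aux {α β γ : Type*} [Fintype α] [Fintype β] [Fintype γ]
    (f : α → β → γ → ℝ) :
    ∑ a : α, ∑ b : β, ∑ c : γ, f a b c = ∑ c : γ, ∑ a : α, ∑ b : β, f a b c :=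
  calc ∑ a : α, ∑ b : β, ∑ c : γ, f a b c
      = ∑ a : α, ∑ c : γ, ∑ b : β, f a b c :=
        Finset.sum_congr rfl fun _ _ => Finset.sum_comm
    _ = ∑ c : γ, ∑ a : α, ∑ b : β, f a b c := Finset.sum_comm

/-- If `Q` is a `k × l` integer matrix with nonzero rows and `W` satisfies the integral
positivity condition, then `k ≤ tr(W QᵀQ)`. -/
theorem card_le_trace_weighted (k l : ℕ)
    (Q : Matrix (Fin k) (Fin l) ℤ) (hQ : ∀ i : Fin k, Q i ≠ 0)
    (W : Matrix (Fin l) (Fin l) ℝ)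
    (hW : ∀ x : Fin l → ℤ, x ≠ 0 →
      1 ≤ (fun i => (x i : ℝ)) ⬝ᵥ W.mulVec (fun i => (x i : ℝ))) :
    (k : ℝ) ≤ (W * ((Q.map ((↑) : ℤ → ℝ))ᵀ * Q.map ((↑) : ℤ → ℝ))).trace := by
  have key : (W * ((Q.map ((↑) : ℤ → ℝ))ᵀ * Q.map ((↑) : ℤ → ℝ))).trace
      = ∑ i : Fin k, (fun a => ((Q i a : ℤ) : ℝ)) ⬝ᵥ W.mulVec (fun a => ((Q i a : ℤ) : ℝ)) := by
    simp only [Matrix.trace, Matrix.diag, Matrix.mul_apply, Matrix.transpose_apply,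
      Matrix.map_apply, dotProduct, Matrix.mulVec, Finset.mul_sum, Finset.sum_mul]
    rw [sum_swap3_aux (fun a b i => W a b * ((Q i b : ℝ) * (Q i a : ℝ)))]
    exact Finset.sum_congr rfl fun i _ => Finset.sum_congr rfl fun a _ =>
      Finset.sum_congr rfl fun b _ => by ring
  rw [key]
  calc (k : ℝ) = ∑ _i : Fin k, (1 : ℝ) := by simp
    _ ≤ _ := Finset.sum_le_sum fun i _ => hW (Q i) (hQ i)
end

section
/- Let Q be a k×l integer matrix each of whose rows is nonzero, suppose C := QᵀQ is invertible, and let m > 0 be a real number such that x C⁻¹ xᵀ ≥ m for every nonzero x ∈ ℤˡ. Then k ≤ l/m. -/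
open Matrix

/-- Brauer's bound: if `Q` is a `k × l` integer matrix with nonzero rows, `C = QᵀQ` is
invertible and `x C⁻¹ xᵀ ≥ m > 0` for all nonzero integer vectors `x`, then `k ≤ l/m`. -/
theorem card_le_div_of_inv_cartan_bound (k l : ℕ)
    (Q : Matrix (Fin k) (Fin l) ℤ) (hQ : ∀ i : Fin k, Q i ≠ 0)
    (C : Matrix (Fin l) (Fin l) ℝ)
    (hC : C = (Q.map ((↑) : ℤ → ℝ))ᵀ * Q.map ((↑) : ℤ → ℝ))
    (hCinv : IsUnit C.det) (m : ℝ) (hm : 0 < m)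
    (hbound : ∀ x : Fin l → ℤ, x ≠ 0 →
      m ≤ (fun i => (x i : ℝ)) ⬝ᵥ C⁻¹.mulVec (fun i => (x i : ℝ))) :
    (k : ℝ) ≤ l / m := by
  set Q' : Matrix (Fin k) (Fin l) ℝ := Q.map ((↑) : ℤ → ℝ) with hQ'
  have key : ∀ i : Fin k, m ≤ Q' i ⬝ᵥ C⁻¹.mulVec (Q' i) := fun i => by
    have hQi : Q i ≠ 0 := hQ i
    have hb := hbound (Q i) hQi
    exact hb
  have hsum : (k : ℝ) * m ≤ ∑ i : Fin k, Q' i ⬝ᵥ C⁻¹.mulVec (Q' i) := by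
    calc (k : ℝ) * m = ∑ _i : Fin k, m := by
          simp [Finset.sum_const, mul_comm]
      _ ≤ _ := Finset.sum_le_sum fun i _ => key i
  have htr : ∑ i : Fin k, Q' i ⬝ᵥ C⁻¹.mulVec (Q' i) = (l : ℝ) := by
    have h1 : ∑ i : Fin k, Q' i ⬝ᵥ C⁻¹.mulVec (Q' i)
        = Matrix.trace (Q' * C⁻¹ * Q'ᵀ) := by
      unfold Matrix.trace
      rw [Finset.sum_congr rfl]
      intro i _
      simp only [Matrix.diag, Matrix.mul_apply, Matrix.transpose_apply,
        dotProduct, Matrix.mulVec, Finset.sum_mul, Finset.mul_sum]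
      rw [Finset.sum_comm]
      apply Finset.sum_congr rfl
      intro j _
      apply Finset.sum_congr rfl
      intro r _
      ring
    rw [h1, Matrix.trace_mul_comm, ← Matrix.mul_assoc, ← hC,
      Matrix.mul_nonsing_inv C hCinv, Matrix.trace_one]
    simp
  rw [le_div_iff₀ hm]
  calc (k : ℝ) * m ≤ _ := hsum
    _ = (l : ℝ) := htr
end

section
/- Let C be a symmetric l×l integer matrix and P an l×l permutation matrix with PC = CP. If a ∈ ℤˡ is a row vector with aP = −a, then a C aᵀ is even. -/
open Matrix

/-- If `C` is a symmetric integer matrix commuting with a permutation matrix `P` and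
`a` is an integer row vector with `aP = -a`, then `a C aᵀ` is even. -/
theorem even_of_negated_by_perm (l : ℕ) (C P : Matrix (Fin l) (Fin l) ℤ)
    (hsymm : C.IsSymm)
    (hP : ∃ σ : Equiv.Perm (Fin l), P = σ.permMatrix ℤ)
    (hcomm : P * C = C * P)
    (a : Fin l → ℤ) (ha : Matrix.vecMul a P = -a) :
    Even (a ⬝ᵥ C.mulVec a) := by
  obtain ⟨σ, rfl⟩ := hP
  -- C is invariant under σ on both indices
  have hsub : C.submatrix σ id = C.submatrix id σ.symm := by
    rw [← PEquiv.toMatrix_toPEquiv_mul, ← PEquiv.mul_toMatrix_toPEquiv]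
    exact hcomm
  have hC : ∀ i j, C (σ i) (σ j) = C i j := by
    intro i j
    have := congrFun (congrFun hsub i) (σ j)
    simpa using this
  -- a is negated by σ
  have haσ : ∀ j, a (σ j) = - a j := by
    intro j
    have := congrFun ha (σ j)
    rw [Matrix.vecMul] at this
    simp only [dotProduct, PEquiv.toMatrix_apply, Equiv.toPEquiv_apply, Option.mem_def,
      Option.some_inj, mul_ite, mul_one, mul_zero] at this
    have hsum : (∑ i, if σ i = σ j then a i else 0) = a j := by
      simp [Equiv.apply_eq_iff_eq]
    rw [hsum] at this
    simp only [Pi.neg_apply] at this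
    linarith
  -- the diagonal sum is zero over ℤ
  have hdiag : (∑ i, C i i * a i) = 0 := by
    have h1 : (∑ i, C (σ i) (σ i) * a (σ i)) = ∑ i, C i i * a i :=
      Equiv.sum_comp σ (fun i => C i i * a i)
    have h2 : (∑ i, C (σ i) (σ i) * a (σ i)) = -∑ i, C i i * a i := by
      simp_rw [hC, haσ, mul_neg, Finset.sum_neg_distrib]
    have := h1.symm.trans h2
    linarith
  -- pass to ZMod 2
  rw [even_iff_two_dvd, show (2:ℤ) = ((2:ℕ):ℤ) from rfl, ← ZMod.intCast_zmod_eq_zero_iff_dvd]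
  have hexp : a ⬝ᵥ C.mulVec a = ∑ i, ∑ j, a i * C i j * a j := by
    simp [dotProduct, Matrix.mulVec, Finset.mul_sum, mul_assoc]
  rw [hexp]
  push_cast
  set f : Fin l × Fin l → ZMod 2 := fun p => (a p.1 : ZMod 2) * (C p.1 p.2 : ZMod 2) * (a p.2 : ZMod 2) with hf
  have hprod : (∑ i, ∑ j, (a i : ZMod 2) * (C i j : ZMod 2) * (a j : ZMod 2))
      = ∑ p ∈ Finset.univ ×ˢ Finset.univ, f p := by
    rw [Finset.sum_product]
  rw [hprod, ← Finset.diag_union_offDiag,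
    Finset.sum_union (Finset.disjoint_diag_offDiag _), Finset.sum_diag]
  have hoff : (∑ p ∈ Finset.univ.offDiag, f p) = 0 := by
    apply Finset.sum_involution (fun p _ => (p.2, p.1))
    · intro p _
      have hsym : (C p.2 p.1 : ZMod 2) = (C p.1 p.2 : ZMod 2) := by
        rw [hsymm.apply p.1 p.2]
      have : f (p.2, p.1) = f p := by
        simp only [hf]
        rw [hsym]
        ring
      rw [this, CharTwo.add_self_eq_zero]
    · intro p hp _
      have := (Finset.mem_offDiag.mp hp).2.2
      intro h
      exact this (congrArg Prod.snd h ▸ (congrArg Prod.fst h).symm)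
    · intro p hp
      have h := Finset.mem_offDiag.mp hp
      exact Finset.mem_offDiag.mpr ⟨h.2.1, h.1, fun he => h.2.2 he.symm⟩
    · intro p _
      rfl
  rw [hoff, add_zero]
  have hself : ∀ z : ZMod 2, z * z = z := by decide
  have hterm : ∀ i, f (i, i) = (C i i : ZMod 2) * (a i : ZMod 2) := by
    intro i
    simp only [hf]
    calc (a i : ZMod 2) * (C i i : ZMod 2) * (a i : ZMod 2)
        = (C i i : ZMod 2) * ((a i : ZMod 2) * (a i : ZMod 2)) := by ring
      _ = (C i i : ZMod 2) * (a i : ZMod 2) := by rw [hself]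
  simp_rw [hterm]
  have : (∑ i, (C i i : ZMod 2) * (a i : ZMod 2)) = ((∑ i, C i i * a i : ℤ) : ZMod 2) := by
    push_cast
    rfl
  rw [this, hdiag]
  rfl
end

section
/- Let m ≥ 0 and a ≥ m + 2 be integers, let σ be the automorphism x ↦ 5^{2^m}·x of the cyclic group ℤ/2^aℤ, and let U = (ℤ/2^aℤ) ⋊ ⟨σ⟩ be the corresponding semidirect product. Then the commutator subgroup U′ of U equals the subgroup 2^{m+2}·(ℤ/2^aℤ) of the normal factor, U′ has order 2^{a−m−2} (which equals the order of σ), and the index |U : U′| equals 2^a. -/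
theorem five_pow_two_pow (m : ℕ) : ∃ k : ℕ, Odd k ∧ 5 ^ 2 ^ m = 1 + 2 ^ (m + 2) * k := by
  induction m with
  | zero => exact ⟨1, odd_one, by norm_num⟩
  | succ m ih =>
    obtain ⟨k, hk, h⟩ := ih
    refine ⟨k + 2 ^ (m + 1) * k ^ 2, ?_, ?_⟩
    · rcases hk with ⟨j, hj⟩
      exact ⟨j + 2 ^ m * k ^ 2, by subst hj; ring⟩
    · have : (5:ℕ) ^ 2 ^ (m + 1) = (5 ^ 2 ^ m) ^ 2 := by
        rw [← pow_mul, pow_succ]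
      rw [this, h]; ring

theorem five_pow_zmod (m a : ℕ) : ∃ k : ℕ, Odd k ∧
    (5 : ZMod (2^a)) ^ 2 ^ m = 1 + 2 ^ (m + 2) * (k : ZMod (2^a)) := by
  obtain ⟨k, hk, h⟩ := five_pow_two_pow m
  refine ⟨k, hk, ?_⟩
  have := congrArg (Nat.cast : ℕ → ZMod (2^a)) h
  push_cast at this
  exact this

theorem zmod_mul_mem_zmultiples {n : ℕ} [NeZero n] (r x : ZMod n) :
    x * r ∈ AddSubgroup.zmultiples r := by
  have : x * r = x.val • r := by
    rw [nsmul_eq_mul, ZMod.natCast_val, ZMod.cast_id]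
  rw [this]
  exact AddSubgroup.nsmul_mem _ (AddSubgroup.mem_zmultiples r) _

theorem zmod_mul_mem_zmultiples' {n : ℕ} [NeZero n] {r y : ZMod n} (x : ZMod n)
    (hy : y ∈ AddSubgroup.zmultiples r) : x * y ∈ AddSubgroup.zmultiples r := by
  obtain ⟨z, rfl⟩ := hy
  rw [mul_smul_comm]
  exact AddSubgroup.zsmul_mem _ (zmod_mul_mem_zmultiples r x) _

theorem zmod_zmultiples_unit_mul {n : ℕ} [NeZero n] {v : ZMod n} (hv : IsUnit v) (r : ZMod n) :
    AddSubgroup.zmultiples (v * r) = AddSubgroup.zmultiples r := by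
  apply le_antisymm
  · rw [AddSubgroup.zmultiples_le]
    exact zmod_mul_mem_zmultiples r v
  · rw [AddSubgroup.zmultiples_le]
    have h2 := zmod_mul_mem_zmultiples (v * r) (hv.unit⁻¹ : (ZMod n)ˣ)
    rwa [show ((hv.unit⁻¹ : (ZMod n)ˣ) : ZMod n) * (v * r) = r by
      rw [← mul_assoc]; simp [IsUnit.val_inv_mul]] at h2

theorem orderOf_five_pow_unit {m a : ℕ} (ha : m + 2 ≤ a) (u : (ZMod (2^a))ˣ)
    (hu : (u : ZMod (2^a)) = 5 ^ 2 ^ m) : orderOf u = 2 ^ (a - m - 2) := by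
  have key : ∀ j, (u ^ 2 ^ j : (ZMod (2^a))ˣ) = 1 ↔ ((2:ℕ)^a ∣ 2 ^ (m + j + 2)) := by
    intro j
    obtain ⟨k, hk, h⟩ := five_pow_zmod (m + j) a
    have hval : ((u ^ 2 ^ j : (ZMod (2^a))ˣ) : ZMod (2^a))
        = 1 + 2 ^ (m + j + 2) * (k : ZMod (2^a)) := by
      rw [Units.val_pow_eq_pow_val, hu, ← pow_mul, ← pow_add, h]
    constructor
    · intro h1
      rw [h1, Units.val_one] at hval
      have h0 : (2 : ZMod (2^a)) ^ (m + j + 2) * (k : ZMod (2^a)) = 0 := by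
        have := hval.symm
        rwa [add_eq_left] at this
      have h0' : ((2 ^ (m + j + 2) * k : ℕ) : ZMod (2^a)) = 0 := by push_cast; exact h0
      rw [ZMod.natCast_eq_zero_iff] at h0'
      refine Nat.Coprime.dvd_of_dvd_mul_right (Nat.Coprime.pow_left a ?_) h0'
      refine (Nat.Prime.coprime_iff_not_dvd Nat.prime_two).2 ?_
      intro hdvd
      rcases hk with ⟨j, hj⟩
      omega
    · intro hdvd
      have hz : ((2:ZMod (2^a)) ^ (m + j + 2)) = 0 := by
        have h2 : (((2:ℕ) ^ (m + j + 2) : ℕ) : ZMod (2^a)) = 0 :=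
          (ZMod.natCast_eq_zero_iff _ _).2 hdvd
        push_cast at h2
        exact h2
      apply Units.ext
      rw [hval, hz, Units.val_one]
      simp
  have h1 : u ^ 2 ^ (a - m - 2) = 1 := by
    rw [key]
    exact pow_dvd_pow 2 (by omega)
  rcases Nat.eq_or_lt_of_le ha with heq | hlt
  · have h0 : a - m - 2 = 0 := by omega
    rw [h0] at h1 ⊢
    simpa using h1
  · have hne : u ^ 2 ^ (a - m - 3) ≠ 1 := by
      rw [Ne, key]
      intro hdvd
      have := (Nat.pow_dvd_pow_iff_le_right (by norm_num : 1 < 2)).1 hdvd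
      omega
    have h2 : a - m - 2 = (a - m - 3) + 1 := by omega
    rw [h2] at h1 ⊢
    exact orderOf_eq_prime_pow hne h1

/-- The action of the unit group of `ZMod q` on `Multiplicative (ZMod q)` by
multiplication, as a homomorphism into the automorphism group. -/
def zmodMulAut (q : ℕ) : (ZMod q)ˣ →* MulAut (Multiplicative (ZMod q)) where
  toFun u := AddEquiv.toMultiplicative (DistribMulAction.toAddAut (ZMod q)ˣ (ZMod q) u)
  map_one' := by ext x; simp
  map_mul' u v := by ext x; simp [mul_smul]

theorem zmodMulAut_apply (q : ℕ) (u : (ZMod q)ˣ) (x : Multiplicative (ZMod q)) :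
    zmodMulAut q u x = Multiplicative.ofAdd ((u : ZMod q) * x.toAdd) := rfl

theorem zmodMulAut_injective (q : ℕ) : Function.Injective (zmodMulAut q) := by
  refine (injective_iff_map_eq_one _).2 fun w hw => ?_
  have := congrArg (fun e : MulAut (Multiplicative (ZMod q)) => (e (Multiplicative.ofAdd 1)).toAdd) hw
  simp [zmodMulAut_apply] at this
  exact Units.ext (by simpa using this)

/-- The semidirect product `(ℤ/2^aℤ) ⋊ ⟨σ⟩` for an automorphism `σ` of `ℤ/2^aℤ`. -/
abbrev Ugrp (a : ℕ) (σ : MulAut (Multiplicative (ZMod (2 ^ a)))) :=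
  Multiplicative (ZMod (2 ^ a)) ⋊[(Subgroup.zpowers σ).subtype] (Subgroup.zpowers σ)

set_option maxHeartbeats 2000000 in
/-- For `σ : x ↦ 5^(2^m)·x` on `ℤ/2^aℤ` with `a ≥ m + 2`, the commutator subgroup of
`U = (ℤ/2^aℤ) ⋊ ⟨σ⟩` is `2^(m+2)·(ℤ/2^aℤ)`, it has order `2^(a-m-2) = |⟨σ⟩|`, and
`|U : U′| = 2^a`. -/
theorem commutator_semidirect_five_pow (m a : ℕ) (ha : m + 2 ≤ a)
    (u : (ZMod (2 ^ a))ˣ) (hu : (u : ZMod (2 ^ a)) = 5 ^ 2 ^ m)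
    (σ : MulAut (Multiplicative (ZMod (2 ^ a)))) (hσ : σ = zmodMulAut (2 ^ a) u) :
    commutator (Ugrp a σ) =
      Subgroup.map SemidirectProduct.inl
        (AddSubgroup.toSubgroup (AddSubgroup.zmultiples ((2 : ZMod (2 ^ a)) ^ (m + 2)))) ∧
    Nat.card (commutator (Ugrp a σ)) = 2 ^ (a - m - 2) ∧
    Nat.card (commutator (Ugrp a σ)) = orderOf σ ∧
    (commutator (Ugrp a σ)).index = 2 ^ a := by
  haveI : NeZero (2 ^ a) := ⟨pow_ne_zero a two_ne_zero⟩
  obtain ⟨k, hk, hck⟩ := five_pow_zmod m a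
  have hkunit : IsUnit ((k : ZMod (2^a))) := by
    rw [ZMod.isUnit_iff_coprime]
    refine Nat.Coprime.pow_right a (Nat.coprime_comm.1 ?_)
    refine (Nat.Prime.coprime_iff_not_dvd Nat.prime_two).2 ?_
    intro hdvd; rcases hk with ⟨j, hj⟩; omega
  set M₀ : AddSubgroup (ZMod (2^a)) := AddSubgroup.zmultiples ((2 : ZMod (2 ^ a)) ^ (m + 2))
    with hM₀
  have hM : M₀ = AddSubgroup.zmultiples ((u : ZMod (2^a)) - 1) := by
    rw [hM₀, hu, hck, show (1 : ZMod (2^a)) + 2 ^ (m + 2) * (k:ZMod (2^a)) - 1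
      = (k:ZMod (2^a)) * 2 ^ (m+2) by ring, zmod_zmultiples_unit_mul hkunit]
  -- powers of u minus 1 lie in M₀
  have hupow : ∀ z : ℤ, ((u ^ z : (ZMod (2^a))ˣ) : ZMod (2^a)) - 1 ∈ M₀ := by
    have hnat : ∀ n : ℕ, ((u ^ n : (ZMod (2^a))ˣ) : ZMod (2^a)) - 1 ∈ M₀ := by
      intro n
      induction n with
      | zero => simpa using M₀.zero_mem
      | succ n ih =>
        have : ((u ^ (n+1) : (ZMod (2^a))ˣ) : ZMod (2^a)) - 1
            = ((u ^ n : (ZMod (2^a))ˣ) : ZMod (2^a)) * ((u : ZMod (2^a)) - 1)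
              + (((u ^ n : (ZMod (2^a))ˣ) : ZMod (2^a)) - 1) := by
          push_cast [pow_succ]; ring
        rw [this]
        refine M₀.add_mem ?_ ih
        rw [hM]
        exact zmod_mul_mem_zmultiples _ _
    intro z
    obtain ⟨n, rfl | rfl⟩ := Int.eq_nat_or_neg z
    · rw [zpow_natCast]; exact hnat n
    · have : ((u ^ (-(n:ℤ)) : (ZMod (2^a))ˣ) : ZMod (2^a)) - 1
          = -(((u ^ (-(n:ℤ)) : (ZMod (2^a))ˣ) : ZMod (2^a))
              * (((u ^ n : (ZMod (2^a))ˣ) : ZMod (2^a)) - 1)) := by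
        have hinv : ((u ^ (-(n:ℤ)) : (ZMod (2^a))ˣ) : ZMod (2^a))
            * ((u ^ n : (ZMod (2^a))ˣ) : ZMod (2^a)) = 1 := by
          rw [← Units.val_mul, ← zpow_natCast u n, ← zpow_add]
          simp
        rw [mul_sub, hinv]; ring
      rw [this]
      exact M₀.neg_mem (zmod_mul_mem_zmultiples' _ (hnat n))
  subst hσ
  set σ := zmodMulAut (2^a) u with hσdef
  -- the action of any element of ⟨σ⟩ fixes everything mod M₀
  have haction : ∀ (g : Subgroup.zpowers σ) (x : Multiplicative (ZMod (2^a))),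
      (((Subgroup.zpowers σ).subtype g) x).toAdd - x.toAdd ∈ M₀ := by
    rintro ⟨g, hg⟩ x
    obtain ⟨z, rfl⟩ := Subgroup.mem_zpowers_iff.1 hg
    have : (σ ^ z) x = Multiplicative.ofAdd (((u ^ z : (ZMod (2^a))ˣ) : ZMod (2^a)) * x.toAdd) := by
      rw [hσdef, ← map_zpow, zmodMulAut_apply]
    simp only [Subgroup.coe_subtype, this]
    rw [toAdd_ofAdd,
      show ((u ^ z : (ZMod (2^a))ˣ) : ZMod (2^a)) * x.toAdd - x.toAdd
        = (((u ^ z : (ZMod (2^a))ˣ) : ZMod (2^a)) - 1) * x.toAdd by ring]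
    rw [mul_comm]
    exact zmod_mul_mem_zmultiples' _ (hupow z)
  -- the abelian quotient
  let Q := ZMod (2^a) ⧸ M₀
  let f₀ : Multiplicative (ZMod (2^a)) →* Multiplicative Q :=
    AddMonoidHom.toMultiplicative (QuotientAddGroup.mk' M₀)
  let H := Subgroup.zpowers σ
  let f₁ : Multiplicative (ZMod (2^a)) →* Multiplicative Q × H := f₀.prod 1
  let f₂ : H →* Multiplicative Q × H := (1 : H →* Multiplicative Q).prod (MonoidHom.id H)
  have hcompat : ∀ g : H, f₁.comp ((Subgroup.zpowers σ).subtype g).toMonoidHom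
      = (MulAut.conj (f₂ g)).toMonoidHom.comp f₁ := by
    intro g
    refine MonoidHom.ext fun x => Prod.ext ?_ ?_
    · show f₀ (((Subgroup.zpowers σ).subtype g) x)
        = (f₂ g).1 * (f₁ x).1 * ((f₂ g).1)⁻¹
      have h2 : (f₂ g).1 = 1 := rfl
      rw [h2, one_mul, inv_one, mul_one]
      show Multiplicative.ofAdd (QuotientAddGroup.mk' M₀ ((((Subgroup.zpowers σ).subtype g) x).toAdd))
        = Multiplicative.ofAdd (QuotientAddGroup.mk' M₀ (x.toAdd))
      congr 1
      rw [QuotientAddGroup.mk'_eq_mk']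
      exact ⟨-((((Subgroup.zpowers σ).subtype g) x).toAdd - x.toAdd), M₀.neg_mem (haction g x),
        by ring⟩
    · show (1 : H) = g * 1 * g⁻¹
      simp
  let φU : Ugrp a σ →* Multiplicative Q × H := SemidirectProduct.lift f₁ f₂ hcompat
  set T : Subgroup (Ugrp a σ) :=
    Subgroup.map SemidirectProduct.inl (AddSubgroup.toSubgroup M₀) with hT
  have hφU : ∀ g : Ugrp a σ, φU g = (f₀ g.left, g.right) := by
    intro g
    rw [show g = SemidirectProduct.inl g.left * SemidirectProduct.inr g.right from
      (SemidirectProduct.inl_left_mul_inr_right g).symm]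
    rw [map_mul, SemidirectProduct.lift_inl, SemidirectProduct.lift_inr]
    ext <;> simp [f₁, f₂] <;> rfl
  have hmemT : ∀ g : Ugrp a σ, g ∈ T ↔ g.left.toAdd ∈ M₀ ∧ g.right = 1 := by
    intro g
    constructor
    · rintro ⟨n, hn, rfl⟩
      exact ⟨hn, rfl⟩
    · rintro ⟨h1, h2⟩
      refine ⟨g.left, h1, ?_⟩
      conv_rhs => rw [← SemidirectProduct.inl_left_mul_inr_right g]
      rw [h2, map_one, mul_one]
  have hker : φU.ker = T := by
    ext g
    rw [MonoidHom.mem_ker, hφU, hmemT, Prod.ext_iff]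
    constructor
    · rintro ⟨h1, h2⟩
      refine ⟨?_, h2⟩
      have : QuotientAddGroup.mk' M₀ (g.left.toAdd) = 0 := h1
      rwa [QuotientAddGroup.mk'_apply, QuotientAddGroup.eq_zero_iff] at this
    · rintro ⟨h1, h2⟩
      refine ⟨?_, h2⟩
      show Multiplicative.ofAdd (QuotientAddGroup.mk' M₀ (g.left.toAdd)) = 1
      rw [QuotientAddGroup.mk'_apply, (QuotientAddGroup.eq_zero_iff _).2 h1]
      rfl
  -- T is contained in the commutator subgroup
  have hgen : (SemidirectProduct.inl (Multiplicative.ofAdd ((u : ZMod (2^a)) - 1)) : Ugrp a σ)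
      ∈ commutator (Ugrp a σ) := by
    have hval : ((Subgroup.zpowers σ).subtype (⟨σ, Subgroup.mem_zpowers σ⟩ : H))
          (Multiplicative.ofAdd (1 : ZMod (2^a))) * (Multiplicative.ofAdd (1 : ZMod (2^a)))⁻¹
        = Multiplicative.ofAdd ((u : ZMod (2^a)) - 1) := by
      show σ (Multiplicative.ofAdd (1 : ZMod (2^a))) * (Multiplicative.ofAdd (1 : ZMod (2^a)))⁻¹ = _
      rw [hσdef, zmodMulAut_apply]
      show Multiplicative.ofAdd ((u : ZMod (2^a)) * Multiplicative.toAdd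
        (Multiplicative.ofAdd (1 : ZMod (2^a))) + -(1 : ZMod (2^a))) = _
      congr 1
      rw [toAdd_ofAdd, mul_one]
      ring
    open scoped commutatorElement in
    have heq : (SemidirectProduct.inl (Multiplicative.ofAdd ((u : ZMod (2^a)) - 1)) : Ugrp a σ)
        = ⁅(SemidirectProduct.inr ⟨σ, Subgroup.mem_zpowers σ⟩ : Ugrp a σ),
            SemidirectProduct.inl (Multiplicative.ofAdd (1 : ZMod (2^a)))⁆ := by
      rw [commutatorElement_def, ← map_inv, ← map_inv,
        show (SemidirectProduct.inr ⟨σ, Subgroup.mem_zpowers σ⟩ : Ugrp a σ) *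
          SemidirectProduct.inl (Multiplicative.ofAdd (1 : ZMod (2^a))) *
          SemidirectProduct.inr (⟨σ, Subgroup.mem_zpowers σ⟩ : H)⁻¹ *
          SemidirectProduct.inl (Multiplicative.ofAdd (1 : ZMod (2^a)))⁻¹
          = SemidirectProduct.inl (((Subgroup.zpowers σ).subtype
              (⟨σ, Subgroup.mem_zpowers σ⟩ : H) (Multiplicative.ofAdd (1 : ZMod (2^a)))) *
              (Multiplicative.ofAdd (1 : ZMod (2^a)))⁻¹) from by
        rw [map_mul, ← SemidirectProduct.inl_aut], hval]
    rw [heq]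
    exact Subgroup.commutator_mem_commutator (Subgroup.mem_top _) (Subgroup.mem_top _)
  have hTle : T ≤ commutator (Ugrp a σ) := by
    intro g hg
    obtain ⟨n, hn, rfl⟩ := hg
    have hn' : n.toAdd ∈ AddSubgroup.zmultiples ((u : ZMod (2^a)) - 1) := by rw [← hM]; exact hn
    obtain ⟨z, hz⟩ := hn'
    have : (SemidirectProduct.inl n : Ugrp a σ)
        = (SemidirectProduct.inl (Multiplicative.ofAdd ((u : ZMod (2^a)) - 1)) : Ugrp a σ) ^ z := by
      rw [← map_zpow]
      congr 1
      have hz' : z • ((u : ZMod (2^a)) - 1) = n.toAdd := hz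
      rw [← ofAdd_zsmul, hz']
      rfl
    rw [this]
    exact Subgroup.zpow_mem _ hgen z
  have hcomm : commutator (Ugrp a σ) = T := by
    open scoped IsMulCommutative in
    exact le_antisymm (hker ▸ Abelianization.commutator_subset_ker φU) hTle
  -- cardinalities
  have hcardM : Nat.card M₀ = 2 ^ (a - m - 2) := by
    rw [hM₀, Nat.card_zmultiples,
      show ((2 : ZMod (2^a)) ^ (m + 2)) = (((2 ^ (m+2) : ℕ) : ZMod (2^a))) by push_cast; ring,
      ZMod.addOrderOf_coe _ (NeZero.ne _),
      Nat.gcd_eq_right (pow_dvd_pow 2 ha), Nat.pow_div ha (by norm_num)]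
    congr 1
  have hcardT : Nat.card T = 2 ^ (a - m - 2) := by
    rw [hT, ← Nat.card_congr ((AddSubgroup.toSubgroup M₀).equivMapOfInjective
      SemidirectProduct.inl SemidirectProduct.inl_injective).toEquiv]
    rw [← hcardM]
    exact Nat.card_congr (Equiv.subtypeEquiv Multiplicative.toAdd (fun x => Iff.rfl)).symm
  have hordσ : orderOf σ = 2 ^ (a - m - 2) := by
    rw [hσdef, orderOf_injective (zmodMulAut (2^a)) (zmodMulAut_injective _) u]
    exact orderOf_five_pow_unit ha u hu
  have hcard : Nat.card (commutator (Ugrp a σ)) = 2 ^ (a - m - 2) := by rw [hcomm]; exact hcardT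
  refine ⟨hcomm, hcard, by rw [hcard, hordσ], ?_⟩
  -- index
  have hsurj : Function.Surjective φU := by
    rintro ⟨y1, y2⟩
    obtain ⟨x, hx⟩ := QuotientAddGroup.mk'_surjective M₀ (y1.toAdd)
    refine ⟨SemidirectProduct.inl (Multiplicative.ofAdd x) * SemidirectProduct.inr y2, ?_⟩
    rw [map_mul, SemidirectProduct.lift_inl, SemidirectProduct.lift_inr]
    refine Prod.ext ?_ ?_
    · show f₀ (Multiplicative.ofAdd x) * 1 = y1
      rw [mul_one]
      show Multiplicative.ofAdd (QuotientAddGroup.mk' M₀ x) = y1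
      rw [hx]
      rfl
    · show (1 : H) * y2 = y2
      rw [one_mul]
  have hindex : (AddSubgroup.index M₀) = 2 ^ (m + 2) := by
    have h1 := AddSubgroup.card_mul_index M₀
    rw [hcardM, Nat.card_zmod] at h1
    have h2 : (2:ℕ) ^ a = 2 ^ (a - m - 2) * 2 ^ (m + 2) := by
      rw [← pow_add]
      congr 1
      omega
    exact Nat.eq_of_mul_eq_mul_left (by positivity) (h1.trans h2)
  have hcardH : Nat.card H = 2 ^ (a - m - 2) := by
    rw [show Nat.card H = orderOf σ from Nat.card_zpowers σ, hordσ]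
  rw [hcomm, ← hker, Subgroup.index_ker,
    φU.range_eq_top_of_surjective hsurj]
  rw [Nat.card_congr Subgroup.topEquiv.toEquiv, Nat.card_prod]
  have hQ : Nat.card (Multiplicative Q) = 2 ^ (m + 2) := by
    rw [Nat.card_congr (Multiplicative.toAdd (α := Q))]
    exact hindex ▸ rfl
  rw [hQ, hcardH, ← pow_add]
  congr 1
  omega
end
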